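/- Let μ ∈ ℝ, λ ∈ ℝ, let ℓ > 0, and let G be a probability measure on (0,∞) with support contained in [ℓ, ∞) and satisfying ∫ log σ dG(σ) < ∞. Then ∫_{−∞}^{∞} f_SNSM(z; μ, λ, G) · max(log|z|, 0) dz < ∞, i.e., the positive part of log|Z| has finite expectation when Z has density f_SNSM(·; μ, λ, G). -/

import Mathlib

open MeasureTheory

/-- Standard normal density. -/
noncomputable def stdPhi (z : ℝ) : ℝ := Real.exp (-(z ^ 2) / 2) / Real.sqrt (2 * Real.pi)

/-- Standard normal cumulative distribution function. -/
noncomputable def stdPhiCDF (z : ℝ) : ℝ := ∫ t in Set.Iic z, stdPhi t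

/-- Skew-normal density with location `μ`, shape `lam`, scale `σ`. -/
noncomputable def snPDF (μ lam σ z : ℝ) : ℝ :=
  (2 / σ) * stdPhi ((z - μ) / σ) * stdPhiCDF (lam * ((z - μ) / σ))

/-- Skew-normal scale mixture density with mixing distribution `G`. -/
noncomputable def snsmPDF (μ lam : ℝ) (G : Measure ℝ) (z : ℝ) : ℝ :=
  ∫ σ, snPDF μ lam σ z ∂G

open Real ENNReal

noncomputable def gaussM : ℝ := ∫ t, stdPhi t * t ^ 2

lemma stdPhi_nonneg (z : ℝ) : 0 ≤ stdPhi z :=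
  div_nonneg (Real.exp_pos _).le (Real.sqrt_nonneg _)

lemma stdPhi_eq (z : ℝ) : stdPhi z = Real.exp (-(1/2) * z ^ 2) * (Real.sqrt (2 * Real.pi))⁻¹ := by
  rw [stdPhi, div_eq_mul_inv]; ring_nf

lemma stdPhi_continuous : Continuous stdPhi := by
  unfold stdPhi
  fun_prop

lemma stdPhi_integrable : Integrable stdPhi := by
  have h := (integrable_exp_neg_mul_sq (by norm_num : (0:ℝ) < 1/2)).mul_const
    (Real.sqrt (2 * Real.pi))⁻¹
  exact h.congr (by filter_upwards with z; rw [stdPhi_eq])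

lemma stdPhi_sq_integrable : Integrable (fun t : ℝ => stdPhi t * t ^ 2) := by
  have h := (integrable_rpow_mul_exp_neg_mul_sq (by norm_num : (0:ℝ) < 1/2)
    (by norm_num : (-1:ℝ) < 2)).mul_const (Real.sqrt (2 * Real.pi))⁻¹
  apply h.congr
  filter_upwards with t
  rw [stdPhi_eq]
  rw [show ((2:ℝ) : ℝ) = ((2:ℕ) : ℝ) by norm_num, Real.rpow_natCast]
  ring

lemma integral_stdPhi : ∫ z, stdPhi z = 1 := by
  have h : ∫ z : ℝ, Real.exp (-(1/2) * z ^ 2) = Real.sqrt (Real.pi / (1/2)) :=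
    integral_gaussian (1/2)
  have h2 : (∫ z, stdPhi z) = (∫ z : ℝ, Real.exp (-(1/2) * z ^ 2)) * (Real.sqrt (2 * Real.pi))⁻¹ := by
    rw [← integral_mul_const]
    exact integral_congr_ae (by filter_upwards with z; rw [stdPhi_eq])
  rw [h2, h]
  rw [show Real.pi / (1/2) = 2 * Real.pi by ring]
  rw [mul_inv_cancel₀]
  positivity

lemma stdPhiCDF_nonneg (z : ℝ) : 0 ≤ stdPhiCDF z :=
  setIntegral_nonneg measurableSet_Iic (fun t _ => stdPhi_nonneg t)

lemma stdPhiCDF_le_one (z : ℝ) : stdPhiCDF z ≤ 1 := by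
  rw [← integral_stdPhi]
  exact setIntegral_le_integral stdPhi_integrable (by filter_upwards with t using stdPhi_nonneg t)

lemma stdPhiCDF_monotone : Monotone stdPhiCDF := by
  intro x y hxy
  exact setIntegral_mono_set stdPhi_integrable.integrableOn
    (by filter_upwards with t using stdPhi_nonneg t)
    (HasSubset.Subset.eventuallyLE (Set.Iic_subset_Iic.mpr hxy))

lemma stdPhiCDF_measurable : Measurable stdPhiCDF := stdPhiCDF_monotone.measurable

lemma snPDF_nonneg {σ : ℝ} (hσ : 0 < σ) (μ lam z : ℝ) : 0 ≤ snPDF μ lam σ z := by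
  unfold snPDF
  have := stdPhi_nonneg ((z - μ) / σ)
  have := stdPhiCDF_nonneg (lam * ((z - μ) / σ))
  positivity

lemma snPDF_le {σ : ℝ} (hσ : 0 < σ) (μ lam z : ℝ) :
    snPDF μ lam σ z ≤ 2 / σ * stdPhi ((z - μ) / σ) := by
  unfold snPDF
  have h1 := stdPhi_nonneg ((z - μ) / σ)
  have h2 := stdPhiCDF_le_one (lam * ((z - μ) / σ))
  calc 2 / σ * stdPhi ((z - μ) / σ) * stdPhiCDF (lam * ((z - μ) / σ))
      ≤ 2 / σ * stdPhi ((z - μ) / σ) * 1 := by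
        apply mul_le_mul_of_nonneg_left h2; positivity
    _ = 2 / σ * stdPhi ((z - μ) / σ) := mul_one _

lemma snPDF_measurable (μ lam : ℝ) :
    Measurable (fun p : ℝ × ℝ => snPDF μ lam p.2 p.1) := by
  unfold snPDF
  have hT : Measurable (fun p : ℝ × ℝ => (p.1 - μ) / p.2) :=
    (measurable_fst.sub measurable_const).div measurable_snd
  exact ((measurable_const.div measurable_snd).mul
    (stdPhi_continuous.measurable.comp hT)).mul
    (stdPhiCDF_measurable.comp (hT.const_mul lam))

lemma logplus_bound {σ : ℝ} (hσ : 0 < σ) (μ z : ℝ) :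
    max (Real.log |z|) 0 ≤ (Real.log (1 + |μ|) + 1) + Real.log (1 + σ) + ((z - μ) / σ) ^ 2 := by
  set t := (z - μ) / σ with ht
  have hz : z = μ + σ * t := by rw [ht, mul_div_cancel₀ _ hσ.ne']; ring
  have habs : |z| ≤ |μ| + σ * |t| := by
    rw [hz]
    calc |μ + σ * t| ≤ |μ| + |σ * t| := abs_add_le _ _
      _ = |μ| + σ * |t| := by rw [abs_mul, abs_of_pos hσ]
  have key : Real.log (1 + |z|) ≤ Real.log (1 + |μ|) + Real.log (1 + σ) + Real.log (1 + |t|) := by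
    have hprod : 1 + |z| ≤ (1 + |μ|) * ((1 + σ) * (1 + |t|)) := by
      have h1 : 0 ≤ |μ| := abs_nonneg _
      have h2 : 0 ≤ |t| := abs_nonneg _
      nlinarith [habs, mul_nonneg h1 h2, mul_nonneg hσ.le h2, mul_nonneg h1 hσ.le]
    calc Real.log (1 + |z|) ≤ Real.log ((1 + |μ|) * ((1 + σ) * (1 + |t|))) :=
          Real.log_le_log (by positivity) hprod
      _ = Real.log (1 + |μ|) + Real.log (1 + σ) + Real.log (1 + |t|) := by
          rw [Real.log_mul (by positivity) (by positivity),
              Real.log_mul (by positivity) (by positivity)]; ring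
  have hlt : Real.log (1 + |t|) ≤ 1 + t ^ 2 := by
    have h1 : Real.log (1 + |t|) ≤ (1 + |t|) - 1 :=
      Real.log_le_sub_one_of_pos (by positivity)
    have h2 : |t| ≤ 1 + t ^ 2 := by nlinarith [sq_nonneg (|t| - 1), sq_abs t]
    linarith
  apply max_le
  · rcases le_or_gt |z| 1 with h | h
    · have : Real.log |z| ≤ 0 := by
        rcases eq_or_ne z 0 with rfl | hz0
        · simp
        · exact Real.log_nonpos (abs_nonneg _) h
      have hL1 : 0 ≤ Real.log (1 + |μ|) := Real.log_nonneg (by simp [abs_nonneg])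
      have hL2 : 0 ≤ Real.log (1 + σ) := Real.log_nonneg (by linarith)
      nlinarith [sq_nonneg t]
    · have : Real.log |z| ≤ Real.log (1 + |z|) :=
        Real.log_le_log (by linarith) (by linarith)
      linarith
  · have hL1 : 0 ≤ Real.log (1 + |μ|) := Real.log_nonneg (by simp [abs_nonneg])
    have hL2 : 0 ≤ Real.log (1 + σ) := Real.log_nonneg (by linarith)
    nlinarith [sq_nonneg t]

lemma gaussM_nonneg : 0 ≤ gaussM :=
  integral_nonneg fun t => mul_nonneg (stdPhi_nonneg t) (sq_nonneg t)

lemma gauss_val {C : ℝ} (hC : 0 ≤ C) :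
    ∫⁻ t, ENNReal.ofReal (stdPhi t * (C + t ^ 2)) = ENNReal.ofReal (C + gaussM) := by
  have hint : Integrable (fun t : ℝ => stdPhi t * (C + t ^ 2)) := by
    have h := (stdPhi_integrable.const_mul C).add stdPhi_sq_integrable
    apply h.congr
    filter_upwards with t; simp; ring
  rw [← ofReal_integral_eq_lintegral_ofReal hint
    (by filter_upwards with t;
        exact mul_nonneg (stdPhi_nonneg t) (by positivity))]
  congr 1
  have : (∫ t, stdPhi t * (C + t ^ 2)) = ∫ t, (C * stdPhi t + stdPhi t * t ^ 2) := by
    apply integral_congr_ae; filter_upwards with t; ring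
  rw [this, integral_add (stdPhi_integrable.const_mul C) stdPhi_sq_integrable,
      integral_const_mul, integral_stdPhi, mul_one, gaussM]

lemma change_of_var (μ : ℝ) {σ : ℝ} (hσ : 0 < σ) {C : ℝ} (hC : 0 ≤ C) :
    ∫⁻ z, ENNReal.ofReal (2 / σ * stdPhi ((z - μ) / σ) * (C + ((z - μ) / σ) ^ 2)) ∂volume
      = ENNReal.ofReal 2 * ENNReal.ofReal (C + gaussM) := by
  set g : ℝ → ℝ≥0∞ := fun t => ENNReal.ofReal (stdPhi t * (C + t ^ 2)) with hg
  have hgmeas : Measurable g :=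
    (measurable_ofReal).comp
      (stdPhi_continuous.measurable.mul ((measurable_const.add (measurable_id.pow_const 2))))
  have h1 : ∀ z : ℝ, ENNReal.ofReal (2 / σ * stdPhi ((z - μ) / σ) * (C + ((z - μ) / σ) ^ 2))
      = ENNReal.ofReal (2 / σ) * g ((z - μ) / σ) := by
    intro z
    rw [hg, mul_assoc, ENNReal.ofReal_mul (by positivity)]
  simp_rw [h1]
  rw [lintegral_const_mul' _ _ ofReal_ne_top]
  have h2 : ∀ z : ℝ, (z - μ) / σ = σ⁻¹ * (z + -μ) := by intro z; ring
  simp_rw [h2]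
  have h3 : ∫⁻ z, g (σ⁻¹ * (z + -μ)) ∂volume = ∫⁻ z, g (σ⁻¹ * z) ∂volume :=
    lintegral_add_right_eq_self (fun z => g (σ⁻¹ * z)) (-μ)
  rw [h3]
  have h4 : ∫⁻ z, g (σ⁻¹ * z) ∂volume = ∫⁻ t, g t ∂(Measure.map (σ⁻¹ * ·) volume) :=
    (lintegral_map hgmeas (measurable_const_mul _)).symm
  rw [h4, Real.map_volume_mul_left (inv_ne_zero hσ.ne'), lintegral_smul_measure]
  have h5 : ENNReal.ofReal |σ⁻¹⁻¹| = ENNReal.ofReal σ := by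
    rw [inv_inv, abs_of_pos hσ]
  rw [h5, smul_eq_mul, ← mul_assoc, ← ENNReal.ofReal_mul (by positivity)]
  have h6 : 2 / σ * σ = 2 := by field_simp
  rw [h6, gauss_val hC]

theorem stmt10 (μ lam ℓ : ℝ) (hℓ : 0 < ℓ) (G : Measure ℝ)
    (hG : IsProbabilityMeasure G) (hsupp : G (Set.Iio ℓ) = 0)
    (hlog : ∫⁻ σ, ENNReal.ofReal (Real.log σ) ∂G < ⊤) :
    ∫⁻ z, ENNReal.ofReal (snsmPDF μ lam G z * max (Real.log |z|) 0) ∂(volume : Measure ℝ)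
      < ⊤ := by
  classical
  haveI := hG
  set c : ℝ → ℝ := fun z => max (Real.log |z|) 0 with hc
  have hc_nonneg : ∀ z, 0 ≤ c z := fun z => le_max_right _ _
  have hc_meas : Measurable c :=
    (Real.measurable_log.comp measurable_abs).max measurable_const
  set f : ℝ → ℝ → ℝ≥0∞ := fun z σ => ENNReal.ofReal (snPDF μ lam σ z * c z) with hf
  have haeℓ : ∀ᵐ σ ∂G, ℓ ≤ σ := by
    rw [ae_iff]
    convert hsupp using 2
    ext σ; simp [Set.mem_Iio, not_le]
  -- Step A
  have stepA : ∀ z, ENNReal.ofReal (snsmPDF μ lam G z * c z) ≤ ∫⁻ σ, f z σ ∂G := by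
    intro z
    by_cases hInt : Integrable (fun σ => snPDF μ lam σ z) G
    · have hae : 0 ≤ᵐ[G] fun σ => snPDF μ lam σ z := by
        filter_upwards [haeℓ] with σ hσ
        exact snPDF_nonneg (lt_of_lt_of_le hℓ hσ) μ lam z
      have h0 : 0 ≤ snsmPDF μ lam G z := integral_nonneg_of_ae hae
      rw [ENNReal.ofReal_mul h0, snsmPDF,
        ofReal_integral_eq_lintegral_ofReal hInt hae,
        ← lintegral_mul_const' (ENNReal.ofReal (c z)) _ ofReal_ne_top]
      apply lintegral_mono_ae
      filter_upwards [haeℓ] with σ hσ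
      rw [hf, ← ENNReal.ofReal_mul (snPDF_nonneg (lt_of_lt_of_le hℓ hσ) μ lam z)]
    · rw [snsmPDF, integral_undef hInt, zero_mul, ENNReal.ofReal_zero]
      exact zero_le
  -- Step B : swap
  have hswap : ∫⁻ z, ∫⁻ σ, f z σ ∂G ∂volume = ∫⁻ σ, ∫⁻ z, f z σ ∂volume ∂G := by
    apply lintegral_lintegral_swap
    apply Measurable.aemeasurable
    exact measurable_ofReal.comp
      ((snPDF_measurable μ lam).mul (hc_meas.comp measurable_fst))
  -- constants
  set Kr : ℝ := (Real.log (1 + |μ|) + 1) + gaussM + Real.log (1 + 1 / ℓ) with hKr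
  have hKr_nonneg : 0 ≤ Kr := by
    have h1 : 0 ≤ Real.log (1 + |μ|) := Real.log_nonneg (by simp [abs_nonneg])
    have h2 : 0 ≤ Real.log (1 + 1 / ℓ) := Real.log_nonneg (by
      have : (0:ℝ) < 1 / ℓ := by positivity
      linarith)
    have := gaussM_nonneg
    rw [hKr]; linarith
  -- Step C
  have stepC : ∀ᵐ σ ∂G, ∫⁻ z, f z σ ∂volume
      ≤ ENNReal.ofReal 2 * (ENNReal.ofReal Kr + ENNReal.ofReal (Real.log σ)) := by
    filter_upwards [haeℓ] with σ hσℓ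
    have hσ : 0 < σ := lt_of_lt_of_le hℓ hσℓ
    set Cσ : ℝ := (Real.log (1 + |μ|) + 1) + Real.log (1 + σ) with hCσ
    have hCσ_nonneg : 0 ≤ Cσ := by
      have h1 : 0 ≤ Real.log (1 + |μ|) := Real.log_nonneg (by simp [abs_nonneg])
      have h2 : 0 ≤ Real.log (1 + σ) := Real.log_nonneg (by linarith)
      linarith
    have hpt : ∀ z, f z σ
        ≤ ENNReal.ofReal (2 / σ * stdPhi ((z - μ) / σ) * (Cσ + ((z - μ) / σ) ^ 2)) := by
      intro z
      apply ENNReal.ofReal_le_ofReal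
      have hb := logplus_bound hσ μ z
      have ha := snPDF_le hσ μ lam z
      have h1 : 0 ≤ 2 / σ * stdPhi ((z - μ) / σ) := by
        have := stdPhi_nonneg ((z - μ) / σ); positivity
      calc snPDF μ lam σ z * c z
          ≤ (2 / σ * stdPhi ((z - μ) / σ)) * (Cσ + ((z - μ) / σ) ^ 2) := by
            apply mul_le_mul ha _ (hc_nonneg z) h1
            rw [hCσ]; exact hb
        _ = 2 / σ * stdPhi ((z - μ) / σ) * (Cσ + ((z - μ) / σ) ^ 2) := by ring
    calc ∫⁻ z, f z σ ∂volume
        ≤ ∫⁻ z, ENNReal.ofReal (2 / σ * stdPhi ((z - μ) / σ) * (Cσ + ((z - μ) / σ) ^ 2)) ∂volume :=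
          lintegral_mono hpt
      _ = ENNReal.ofReal 2 * ENNReal.ofReal (Cσ + gaussM) := change_of_var μ hσ hCσ_nonneg
      _ ≤ ENNReal.ofReal 2 * (ENNReal.ofReal Kr + ENNReal.ofReal (Real.log σ)) := by
          apply mul_le_mul_right
          have hlog1 : Real.log (1 + σ) ≤ Real.log σ + Real.log (1 + 1 / ℓ) := by
            rw [← Real.log_mul hσ.ne' (by positivity)]
            apply Real.log_le_log (by linarith)
            have : σ * (1 + 1 / ℓ) = σ + σ / ℓ := by ring
            rw [this]
            have : 1 ≤ σ / ℓ := (one_le_div hℓ).mpr hσℓ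
            linarith
          calc ENNReal.ofReal (Cσ + gaussM) ≤ ENNReal.ofReal (Kr + Real.log σ) := by
                apply ENNReal.ofReal_le_ofReal
                rw [hCσ, hKr]; linarith
            _ ≤ ENNReal.ofReal Kr + ENNReal.ofReal (Real.log σ) := ENNReal.ofReal_add_le
  -- Step D and final
  calc ∫⁻ z, ENNReal.ofReal (snsmPDF μ lam G z * c z) ∂volume
      ≤ ∫⁻ z, ∫⁻ σ, f z σ ∂G ∂volume := lintegral_mono stepA
    _ = ∫⁻ σ, ∫⁻ z, f z σ ∂volume ∂G := hswap
    _ ≤ ∫⁻ σ, ENNReal.ofReal 2 * (ENNReal.ofReal Kr + ENNReal.ofReal (Real.log σ)) ∂G :=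
        lintegral_mono_ae stepC
    _ = ENNReal.ofReal 2 * ∫⁻ σ, (ENNReal.ofReal Kr + ENNReal.ofReal (Real.log σ)) ∂G :=
        lintegral_const_mul' _ _ ofReal_ne_top
    _ = ENNReal.ofReal 2 * (ENNReal.ofReal Kr * G Set.univ
          + ∫⁻ σ, ENNReal.ofReal (Real.log σ) ∂G) := by
        rw [lintegral_add_left measurable_const, lintegral_const]
    _ < ⊤ := by
        rw [measure_univ, mul_one]
        exact ENNReal.mul_lt_top ofReal_lt_top (ENNReal.add_lt_top.mpr ⟨ofReal_lt_top, hlog⟩)
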